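/- Let Q be a finite symmetric quiver with a_{ii} ≥ 1 for all i ∈ I, and let γ ∈ ℤ_{≥0}^I. Then the ideal J_γ ⊆ A_γ^{prim} has finite codimension, i.e. the quotient A_γ^{prim}/J_γ is a finite-dimensional ℚ-vector space. -/

import Mathlib

set_option synthInstance.maxHeartbeats 400000
set_option maxHeartbeats 2000000

open MvPolynomial

namespace COHA

variable {I : Type} [Fintype I] [DecidableEq I]

/-- Variables `x_{i,α}`, `i ∈ I`, `1 ≤ α ≤ γ i`. -/
abbrev Vars (γ : I → ℕ) : Type := Σ i : I, Fin (γ i)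

/-- The polynomial ring `A_γ = ℚ[x_{i,α}]`. -/
abbrev Amod (γ : I → ℕ) : Type := MvPolynomial (Vars γ) ℚ

/-- A tuple of permutations `σ ∈ P_γ = ∏_i S_{γ^i}` acting on the variables. -/
def permEquiv {γ : I → ℕ} (σ : ∀ i, Equiv.Perm (Fin (γ i))) : Vars γ ≃ Vars γ :=
  Equiv.sigmaCongrRight σ

/-- Invariance under `P_γ`; `ℋ_γ = {f | IsSym f}`. -/
def IsSym {γ : I → ℕ} (f : Amod γ) : Prop :=
  ∀ σ : ∀ i, Equiv.Perm (Fin (γ i)), rename (permEquiv σ) f = f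

/-- The Euler form of the quiver with `a i j` arrows from `i` to `j`. -/
def chi (a : I → I → ℕ) (γ₁ γ₂ : I → ℕ) : ℤ :=
  ∑ i : I, (γ₁ i : ℤ) * (γ₂ i : ℤ) - ∑ i : I, ∑ j : I, (a i j : ℤ) * (γ₁ i : ℤ) * (γ₂ j : ℤ)

/-- `σ_γ`, the sum of all variables. -/
noncomputable def sigmaP (γ : I → ℕ) : Amod γ := ∑ v : Vars γ, X v

/-- Identification of variable sets coming from an equality of dimension vectors. -/
def castV {γ γ' : I → ℕ} (h : γ = γ') : Vars γ ≃ Vars γ' :=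
  Equiv.sigmaCongrRight fun i => finCongr (congrFun h i)

/-- Identification of polynomial rings coming from an equality of dimension vectors. -/
noncomputable def castA {γ γ' : I → ℕ} (h : γ = γ') : Amod γ → Amod γ' :=
  rename (castV h)

/-- `ℋ_γ` as a `ℚ`-submodule of `A_γ`. -/
noncomputable def Hsub (γ : I → ℕ) : Submodule ℚ (Amod γ) where
  carrier := {f | IsSym f}
  add_mem' := fun {f g} hf hg σ => by rw [map_add, hf σ, hg σ]
  zero_mem' := fun σ => map_zero _
  smul_mem' := fun c f hf σ => by rw [map_smul, hf σ]

/-- `ℋ_γ` as a `ℚ`-subalgebra of `A_γ`. -/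
noncomputable def Halg (γ : I → ℕ) : Subalgebra ℚ (Amod γ) where
  carrier := {f | IsSym f}
  mul_mem' := fun {f g} hf hg σ => by rw [map_mul, hf σ, hg σ]
  one_mem' := fun σ => map_one _
  add_mem' := fun {f g} hf hg σ => by rw [map_add, hf σ, hg σ]
  zero_mem' := fun σ => map_zero _
  algebraMap_mem' := fun r σ => by
    simp [MvPolynomial.algebraMap_eq]
/-- Inclusion of the first block of variables. -/
def inlV {γ₁ γ₂ : I → ℕ} : Vars γ₁ → Vars (γ₁ + γ₂) :=
  fun v => ⟨v.1, Fin.castAdd (γ₂ v.1) v.2⟩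

/-- Inclusion of the second block of variables. -/
def inrV {γ₁ γ₂ : I → ℕ} : Vars γ₂ → Vars (γ₁ + γ₂) :=
  fun v => ⟨v.1, Fin.natAdd (γ₁ v.1) v.2⟩

/-- The numerator `∏_{i,j} ∏_{α₁,α₂} (x''_{j,α₂} - x'_{i,α₁})^(a i j)` of the
Kontsevich–Soibelman kernel. -/
noncomputable def shuffleNum (a : I → I → ℕ) (γ₁ γ₂ : I → ℕ) : Amod (γ₁ + γ₂) :=
  ∏ i : I, ∏ j : I, ∏ α₁ : Fin (γ₁ i), ∏ α₂ : Fin (γ₂ j),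
    (X (inrV (γ₁ := γ₁) ⟨j, α₂⟩) - X (inlV (γ₂ := γ₂) ⟨i, α₁⟩)) ^ (a i j)

/-- The denominator `∏_i ∏_{α₁,α₂} (x''_{i,α₂} - x'_{i,α₁})` of the
Kontsevich–Soibelman kernel. -/
noncomputable def shuffleDen (γ₁ γ₂ : I → ℕ) : Amod (γ₁ + γ₂) :=
  ∏ i : I, ∏ α₁ : Fin (γ₁ i), ∏ α₂ : Fin (γ₂ i),
    (X (inrV (γ₁ := γ₁) ⟨i, α₂⟩) - X (inlV (γ₂ := γ₂) ⟨i, α₁⟩))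

/-- `σ` is an `(n₁, n₂)`-shuffle: it is increasing on the two blocks. -/
def IsShuffle (n₁ n₂ : ℕ) (σ : Equiv.Perm (Fin (n₁ + n₂))) : Prop :=
  (∀ p q : Fin n₁, p < q → σ (Fin.castAdd n₂ p) < σ (Fin.castAdd n₂ q)) ∧
  (∀ p q : Fin n₂, p < q → σ (Fin.natAdd n₁ p) < σ (Fin.natAdd n₁ q))

open Classical in
/-- The sum, over all tuples of shuffles, of the permuted rational functions
`f₁(x') f₂(x'') ∏ (x''-x')^(a i j) / ∏ (x''-x')`, as an element of the fraction
field of `A_{γ₁+γ₂}`. -/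
noncomputable def shuffleSum (a : I → I → ℕ) (γ₁ γ₂ : I → ℕ)
    (f₁ : Amod γ₁) (f₂ : Amod γ₂) : FractionRing (Amod (γ₁ + γ₂)) :=
  ∑ σ : ∀ i : I, Equiv.Perm (Fin (γ₁ i + γ₂ i)),
    if ∀ i : I, IsShuffle (γ₁ i) (γ₂ i) (σ i) then
      algebraMap (Amod (γ₁ + γ₂)) _
          (rename (permEquiv (γ := γ₁ + γ₂) σ)
            (rename (inlV (γ₂ := γ₂)) f₁ * rename (inrV (γ₁ := γ₁)) f₂ *
              shuffleNum a γ₁ γ₂)) /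
        algebraMap (Amod (γ₁ + γ₂)) _
          (rename (permEquiv (γ := γ₁ + γ₂) σ) (shuffleDen γ₁ γ₂))
    else 0

open Classical in
/-- The Kontsevich–Soibelman shuffle product `f₁ · f₂ ∈ ℋ_{γ₁+γ₂}`: the unique
polynomial mapping to `shuffleSum` in the fraction field. -/
noncomputable def shuffleMul (a : I → I → ℕ) {γ₁ γ₂ : I → ℕ}
    (f₁ : Amod γ₁) (f₂ : Amod γ₂) : Amod (γ₁ + γ₂) :=
  if h : ∃ p : Amod (γ₁ + γ₂),
      algebraMap (Amod (γ₁ + γ₂)) (FractionRing (Amod (γ₁ + γ₂))) p =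
        shuffleSum a γ₁ γ₂ f₁ f₂
  then h.choose else 0
/-- `A_γ^{prim}`: the subalgebra generated by all differences of variables. -/
noncomputable def Aprim (γ : I → ℕ) : Subalgebra ℚ (Amod γ) :=
  Algebra.adjoin ℚ {f : Amod γ | ∃ u v : Vars γ, f = X u - X v}

/-- For a decomposition `γ = γ₁ + γ₂`, the polynomial
`F_{γ₁,γ₂} = ∏_{i,j} ∏ (x''-x')^(a i j) / ∏_i ∏ (x''-x')`
(written as a polynomial, assuming `a i i ≥ 1`). -/
noncomputable def Fpoly (a : I → I → ℕ) (γ₁ γ₂ : I → ℕ) : Amod (γ₁ + γ₂) :=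
  ∏ i : I, ∏ j : I, ∏ α₁ : Fin (γ₁ i), ∏ α₂ : Fin (γ₂ j),
    (X (inrV (γ₁ := γ₁) ⟨j, α₂⟩) - X (inlV (γ₂ := γ₂) ⟨i, α₁⟩)) ^
      (if i = j then a i i - 1 else a i j)

/-- Generators of `J_γ`: the `P_γ`-orbits of all `F_{γ₁,γ₂}`. -/
def Jgen (a : I → I → ℕ) (γ : I → ℕ) : Set ↥(Aprim (I := I) γ) :=
  {g | ∃ (γ₁ γ₂ : I → ℕ) (_ : γ₁ ≠ 0) (_ : γ₂ ≠ 0) (h : γ₁ + γ₂ = γ)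
        (σ : ∀ i, Equiv.Perm (Fin (γ i))),
      (g : Amod γ) = rename (permEquiv σ) (castA h (Fpoly a γ₁ γ₂))}

/-- The ideal `J_γ ⊆ A_γ^{prim}`. -/
noncomputable def Jideal (a : I → I → ℕ) (γ : I → ℕ) : Ideal ↥(Aprim (I := I) γ) :=
  Ideal.span (Jgen a γ)

/-- Twice `N_γ(Q) - 2 + Σ_i γ^i`:
`Σ_{i≠j} a_ij γ^i γ^j + Σ_i max(a_ii - 1, 0) γ^i (γ^i - 1)`. -/
def Nnum (a : I → I → ℕ) (γ : I → ℕ) : ℕ :=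
  (∑ i : I, ∑ j : I, if i = j then 0 else a i j * γ i * γ j) +
    ∑ i : I, (a i i - 1) * γ i * (γ i - 1)

/-- The bound `N_γ(Q)`. -/
def NQ (a : I → I → ℕ) (γ : I → ℕ) : ℤ :=
  ((Nnum a γ / 2 : ℕ) : ℤ) - (∑ i : I, (γ i : ℤ)) + 2
section FiniteCodim

variable {I : Type} [Fintype I] [DecidableEq I]

lemma diff_mem_Aprim {γ : I → ℕ} (u v : Vars γ) : (X u - X v : Amod γ) ∈ Aprim γ :=
  Algebra.subset_adjoin ⟨u, v, rfl⟩

lemma rename_Fpoly_mem {γ : I → ℕ} (a : I → I → ℕ) (γ₁ γ₂ : I → ℕ)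
    (ρ : Vars (γ₁ + γ₂) → Vars γ) :
    rename ρ (Fpoly a γ₁ γ₂) ∈ Aprim γ := by
  rw [Fpoly]
  simp only [map_prod, map_pow, map_sub, rename_X]
  exact Subalgebra.prod_mem _ fun i _ => Subalgebra.prod_mem _ fun j _ =>
    Subalgebra.prod_mem _ fun α₁ _ => Subalgebra.prod_mem _ fun α₂ _ =>
      Subalgebra.pow_mem _ (diff_mem_Aprim _ _) _

lemma psi_eq_aeval {γ : I → ℕ} {F : Type} [CommRing F] [Algebra ℚ F]
    (ψ : ↥(Aprim (I := I) γ) →ₐ[ℚ] F) (u : Vars γ)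
    (x : Amod γ) (hx : x ∈ Aprim (I := I) γ) :
    ψ ⟨x, hx⟩ = aeval (fun w => ψ ⟨X w - X u, diff_mem_Aprim w u⟩) x := by
  set y : Vars γ → F := fun w => ψ ⟨X w - X u, diff_mem_Aprim w u⟩ with hy
  refine Algebra.adjoin_induction (fun g hg => ?_) (fun r => ?_)
    (fun p q hp hq hp' hq' => ?_) (fun p q hp hq hp' hq' => ?_) hx
  · obtain ⟨u', v', rfl⟩ := hg
    show ψ (⟨X u' - X v', diff_mem_Aprim u' v'⟩ : ↥(Aprim (I := I) γ)) = _
    have h1 : ψ (⟨X u' - X v', diff_mem_Aprim u' v'⟩ : ↥(Aprim (I := I) γ)) =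
        ψ ⟨X u' - X u, diff_mem_Aprim u' u⟩ - ψ ⟨X v' - X u, diff_mem_Aprim v' u⟩ := by
      rw [← map_sub]
      congr 1
      apply Subtype.ext
      show (X u' - X v' : Amod γ) = (X u' - X u) - (X v' - X u)
      ring
    rw [h1]
    simp [hy]
  · have h1 : (⟨algebraMap ℚ (Amod γ) r, _⟩ : ↥(Aprim (I := I) γ)) =
        algebraMap ℚ _ r := Subtype.ext rfl
    rw [h1, AlgHom.commutes, ← (aeval y).commutes r]
  · have h1 : (⟨p + q, _⟩ : ↥(Aprim (I := I) γ)) = ⟨p, hp⟩ + ⟨q, hq⟩ := rfl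
    rw [h1, map_add, hp', hq', ← map_add]
  · have h1 : (⟨p * q, _⟩ : ↥(Aprim (I := I) γ)) = ⟨p, hp⟩ * ⟨q, hq⟩ := rfl
    rw [h1, map_mul, hp', hq', ← map_mul]

lemma psi_diff_eq_zero {γ : I → ℕ} (a : I → I → ℕ) {F : Type} [Field F] [Algebra ℚ F]
    (ψ : ↥(Aprim (I := I) γ) →ₐ[ℚ] F)
    (hJ : ∀ g ∈ Jgen a γ, ψ g = 0) (u v : Vars γ) :
    ψ ⟨X u - X v, diff_mem_Aprim u v⟩ = 0 := by
  classical
  set y : Vars γ → F := fun w => ψ ⟨X w - X u, diff_mem_Aprim w u⟩ with hy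
  have key : ∀ (x : Amod γ) (hx : x ∈ Aprim (I := I) γ), ψ ⟨x, hx⟩ = aeval y x :=
    psi_eq_aeval ψ u
  have hconst : ∀ w w' : Vars γ, y w = y w' := by
    by_contra hne
    push_neg at hne
    obtain ⟨w, w', hww⟩ := hne
    set c : F := y w' with hc
    set P : ∀ i : I, Fin (γ i) → Prop := fun i α => y ⟨i, α⟩ = c with hP
    set γ₂ : I → ℕ := fun i => Fintype.card {α : Fin (γ i) // P i α} with hγ₂
    set γ₁ : I → ℕ := fun i => Fintype.card {α : Fin (γ i) // ¬ P i α} with hγ₁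
    have hsum : γ₁ + γ₂ = γ := by
      funext i
      have h := Fintype.card_congr (Equiv.sumCompl (P i))
      rw [Fintype.card_sum, Fintype.card_fin] at h
      show Fintype.card {α : Fin (γ i) // ¬ P i α} + Fintype.card {α : Fin (γ i) // P i α} = γ i
      omega
    set eN : ∀ i : I, Fin (γ₁ i) ≃ {α : Fin (γ i) // ¬ P i α} :=
      fun i => (Fintype.equivFinOfCardEq rfl).symm with heN
    set eP : ∀ i : I, Fin (γ₂ i) ≃ {α : Fin (γ i) // P i α} :=
      fun i => (Fintype.equivFinOfCardEq rfl).symm with heP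
    set e : ∀ i : I, Fin (γ₁ i + γ₂ i) ≃ Fin (γ i) := fun i =>
      finSumFinEquiv.symm.trans ((Equiv.sumCongr (eN i) (eP i)).trans
        ((Equiv.sumComm _ _).trans (Equiv.sumCompl (P i)))) with he
    set σ : ∀ i : I, Equiv.Perm (Fin (γ i)) :=
      fun i => ((finCongr (congrFun hsum i)).symm.trans (e i)) with hσ
    have he_l : ∀ (i : I) (α₁ : Fin (γ₁ i)),
        e i (Fin.castAdd (γ₂ i) α₁) = (eN i α₁).val := by
      intro i α₁
      rw [he]
      simp only [Equiv.trans_apply, finSumFinEquiv_symm_apply_castAdd, Equiv.sumCongr_apply,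
        Sum.map_inl, Equiv.sumComm_apply, Sum.swap_inl, Equiv.sumCompl_apply_inr]
    have he_r : ∀ (j : I) (α₂ : Fin (γ₂ j)),
        e j (Fin.natAdd (γ₁ j) α₂) = (eP j α₂).val := by
      intro j α₂
      rw [he]
      simp only [Equiv.trans_apply, finSumFinEquiv_symm_apply_natAdd, Equiv.sumCongr_apply,
        Sum.map_inr, Equiv.sumComm_apply, Sum.swap_inr, Equiv.sumCompl_apply_inl]
    have hcomp_l : ∀ (i : I) (α₁ : Fin (γ₁ i)),
        (permEquiv σ) (castV hsum (inlV (γ₂ := γ₂) ⟨i, α₁⟩)) = ⟨i, (eN i α₁).val⟩ := by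
      intro i α₁
      show (⟨i, (e i) ((finCongr (congrFun hsum i)).symm ((finCongr (congrFun hsum i))
        (Fin.castAdd (γ₂ i) α₁)))⟩ : Vars γ) = _
      rw [Equiv.symm_apply_apply, he_l]
    have hcomp_r : ∀ (j : I) (α₂ : Fin (γ₂ j)),
        (permEquiv σ) (castV hsum (inrV (γ₁ := γ₁) ⟨j, α₂⟩)) = ⟨j, (eP j α₂).val⟩ := by
      intro j α₂
      show (⟨j, (e j) ((finCongr (congrFun hsum j)).symm ((finCongr (congrFun hsum j))
        (Fin.natAdd (γ₁ j) α₂)))⟩ : Vars γ) = _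
      rw [Equiv.symm_apply_apply, he_r]
    have h1 : γ₁ ≠ 0 := by
      intro h
      have hpos : 0 < γ₁ w.1 := Fintype.card_pos_iff.mpr ⟨⟨w.2, hww⟩⟩
      rw [h] at hpos
      simp at hpos
    have h2 : γ₂ ≠ 0 := by
      intro h
      have hpos : 0 < γ₂ w'.1 := Fintype.card_pos_iff.mpr ⟨⟨w'.2, rfl⟩⟩
      rw [h] at hpos
      simp at hpos
    set gval : Amod γ := rename (permEquiv σ) (castA hsum (Fpoly a γ₁ γ₂)) with hgval
    have hmem : gval ∈ Aprim (I := I) γ := by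
      rw [hgval]
      show rename (permEquiv σ) (rename (castV hsum) (Fpoly a γ₁ γ₂)) ∈ Aprim (I := I) γ
      rw [rename_rename]
      exact rename_Fpoly_mem a γ₁ γ₂ _
    have hgen : (⟨gval, hmem⟩ : ↥(Aprim (I := I) γ)) ∈ Jgen a γ :=
      ⟨γ₁, γ₂, h1, h2, hsum, σ, rfl⟩
    have hz : ψ ⟨gval, hmem⟩ = 0 := hJ _ hgen
    rw [key gval hmem] at hz
    refine absurd hz ?_
    show ¬ aeval y (rename (permEquiv σ) (rename (castV hsum) (Fpoly a γ₁ γ₂))) = 0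
    rw [rename_rename, aeval_rename, Fpoly]
    simp only [map_prod, map_pow, map_sub, aeval_X, Function.comp]
    refine Finset.prod_ne_zero_iff.mpr fun i _ => Finset.prod_ne_zero_iff.mpr fun j _ =>
      Finset.prod_ne_zero_iff.mpr fun α₁ _ => Finset.prod_ne_zero_iff.mpr fun α₂ _ => ?_
    apply pow_ne_zero
    rw [sub_ne_zero]
    rw [hcomp_l i α₁, hcomp_r j α₂]
    have hPv : y ⟨j, (eP j α₂).val⟩ = c := (eP j α₂).2
    have hNv : y ⟨i, (eN i α₁).val⟩ ≠ c := (eN i α₁).2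
    rw [hPv]
    exact fun h => hNv h.symm
  rw [key]
  have : aeval y (X u - X v : Amod γ) = y u - y v := by simp
  rw [this, hconst u v, sub_self]

end FiniteCodim

/-- The ideal `J_γ ⊆ A_γ^{prim}` has finite codimension: the quotient
`A_γ^{prim} / J_γ` is a finite-dimensional `ℚ`-vector space (for a symmetric quiver
with at least one loop at every vertex). -/
theorem Jideal_finite_codimension
    (I : Type) [Fintype I] [DecidableEq I] (a : I → I → ℕ)
    (hsym : ∀ i j : I, a i j = a j i) (hloops : ∀ i : I, 1 ≤ a i i)
    (γ : I → ℕ) :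
    FiniteDimensional ℚ (↥(Aprim (I := I) γ) ⧸ Jideal a γ) := by
  classical
  -- `A_γ^{prim}` is a finitely generated `ℚ`-algebra.
  have hFG : (Aprim (I := I) γ).FG := by
    refine ⟨(Set.finite_range
      (fun p : Vars γ × Vars γ => (X p.1 - X p.2 : Amod γ))).toFinset, ?_⟩
    rw [Set.Finite.coe_toFinset]
    show Algebra.adjoin ℚ _ = Algebra.adjoin ℚ _
    congr 1
    ext f
    constructor
    · rintro ⟨p, rfl⟩; exact ⟨p.1, p.2, rfl⟩
    · rintro ⟨u, v, rfl⟩; exact ⟨(u, v), rfl⟩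
  haveI hFT : Algebra.FiniteType ℚ ↥(Aprim (I := I) γ) :=
    (Subalgebra.fg_iff_finiteType _).mp hFG
  haveI : IsJacobsonRing ↥(Aprim (I := I) γ) := isJacobsonRing_of_finiteType (A := ℚ)
  -- every generator `X u - X v` lies in the radical of `J_γ`
  have hrad : ∀ u v : Vars γ,
      (⟨X u - X v, diff_mem_Aprim u v⟩ : ↥(Aprim (I := I) γ)) ∈ (Jideal a γ).radical := by
    intro u v
    rw [Ideal.radical_eq_jacobson, Ideal.jacobson]
    refine Ideal.mem_sInf.mpr ?_
    rintro m ⟨hJm, hmax⟩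
    haveI := hmax
    letI : Field (↥(Aprim (I := I) γ) ⧸ m) := Ideal.Quotient.field m
    haveI : Algebra.FiniteType ℚ (↥(Aprim (I := I) γ) ⧸ m) :=
      Algebra.FiniteType.of_surjective (Ideal.Quotient.mkₐ ℚ m)
        (Ideal.Quotient.mkₐ_surjective ℚ m)
    haveI := finite_of_finite_type_of_isJacobsonRing ℚ (↥(Aprim (I := I) γ) ⧸ m)
    haveI := (faithfulSMul_iff_algebraMap_injective ℚ (↥(Aprim (I := I) γ) ⧸ m)).mpr
      (algebraMap ℚ (↥(Aprim (I := I) γ) ⧸ m)).injective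
    haveI := Algebra.IsAlgebraic.of_finite ℚ (↥(Aprim (I := I) γ) ⧸ m)
    set ψ : ↥(Aprim (I := I) γ) →ₐ[ℚ] AlgebraicClosure ℚ :=
      (IsAlgClosed.lift (M := AlgebraicClosure ℚ)
        (S := ↥(Aprim (I := I) γ) ⧸ m)).comp (Ideal.Quotient.mkₐ ℚ m) with hψ
    have hJψ : ∀ g ∈ Jgen a γ, ψ g = 0 := by
      intro g hg
      have hgm : g ∈ m := hJm (Ideal.subset_span hg)
      rw [hψ]
      simp only [AlgHom.comp_apply, Ideal.Quotient.mkₐ_eq_mk]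
      rw [Ideal.Quotient.eq_zero_iff_mem.mpr hgm, map_zero]
    have h0 : ψ ⟨X u - X v, diff_mem_Aprim u v⟩ = 0 := psi_diff_eq_zero a ψ hJψ u v
    rw [hψ] at h0
    simp only [AlgHom.comp_apply, Ideal.Quotient.mkₐ_eq_mk] at h0
    have hinj := (IsAlgClosed.lift (M := AlgebraicClosure ℚ)
      (S := ↥(Aprim (I := I) γ) ⧸ m) (R := ℚ)).toRingHom.injective
    have : Ideal.Quotient.mk m (⟨X u - X v, diff_mem_Aprim u v⟩ :
        ↥(Aprim (I := I) γ)) = 0 := by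
      apply hinj
      rw [map_zero]
      exact h0
    exact Ideal.Quotient.eq_zero_iff_mem.mp this
  -- hence the quotient is integral over `ℚ`
  haveI hInt : Algebra.IsIntegral ℚ (↥(Aprim (I := I) γ) ⧸ Jideal a γ) := by
    refine ⟨fun r => ?_⟩
    obtain ⟨x, rfl⟩ := Ideal.Quotient.mk_surjective r
    have hmap : ∀ x : Amod γ, ∀ hx : x ∈ Aprim (I := I) γ,
        IsIntegral ℚ (Ideal.Quotient.mk (Jideal a γ) ⟨x, hx⟩) := by
      intro x hx
      refine Algebra.adjoin_induction (fun g hg => ?_) (fun r => ?_)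
        (fun p q hp hq hp' hq' => ?_) (fun p q hp hq hp' hq' => ?_) hx
      · obtain ⟨u', v', rfl⟩ := hg
        obtain ⟨n, hn⟩ := hrad u' v'
        have hz : (Ideal.Quotient.mk (Jideal a γ)
            (⟨X u' - X v', diff_mem_Aprim u' v'⟩ : ↥(Aprim (I := I) γ))) ^ n = 0 := by
          rw [← map_pow]
          exact Ideal.Quotient.eq_zero_iff_mem.mpr hn
        show IsIntegral ℚ (Ideal.Quotient.mk (Jideal a γ)
          (⟨X u' - X v', diff_mem_Aprim u' v'⟩ : ↥(Aprim (I := I) γ)))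
        refine ⟨Polynomial.X ^ (n + 1), Polynomial.monic_X_pow _, ?_⟩
        have heval : Polynomial.eval₂ (algebraMap ℚ (↥(Aprim (I := I) γ) ⧸ Jideal a γ))
            (Ideal.Quotient.mk (Jideal a γ)
              (⟨X u' - X v', diff_mem_Aprim u' v'⟩ : ↥(Aprim (I := I) γ)))
            (Polynomial.X ^ (n + 1)) =
            (Ideal.Quotient.mk (Jideal a γ)
              (⟨X u' - X v', diff_mem_Aprim u' v'⟩ : ↥(Aprim (I := I) γ))) ^ (n + 1) :=
          Polynomial.eval₂_X_pow _ _
        rw [heval, pow_succ, hz]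
        exact mul_eq_zero_of_left
          (rfl : (0 : ↥(Aprim (I := I) γ) ⧸ Jideal a γ) = 0) _
      · have h1 : (⟨algebraMap ℚ (Amod γ) r, _⟩ : ↥(Aprim (I := I) γ)) =
            algebraMap ℚ _ r := Subtype.ext rfl
        have h2 : (Ideal.Quotient.mk (Jideal a γ)) ((algebraMap ℚ ↥(Aprim (I := I) γ)) r) =
            algebraMap ℚ _ r := (Ideal.Quotient.mkₐ ℚ (Jideal a γ)).commutes r
        rw [h1, h2]
        exact isIntegral_algebraMap
      · have h1 : (⟨p + q, _⟩ : ↥(Aprim (I := I) γ)) = ⟨p, hp⟩ + ⟨q, hq⟩ := rfl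
        rw [h1, map_add]
        exact IsIntegral.add (R := ℚ) (A := ↥(Aprim (I := I) γ) ⧸ Jideal a γ) hp' hq'
      · have h1 : (⟨p * q, _⟩ : ↥(Aprim (I := I) γ)) = ⟨p, hp⟩ * ⟨q, hq⟩ := rfl
        rw [h1, map_mul]
        exact IsIntegral.mul (R := ℚ) (A := ↥(Aprim (I := I) γ) ⧸ Jideal a γ) hp' hq'
    exact hmap x.1 x.2
  haveI : Algebra.FiniteType ℚ (↥(Aprim (I := I) γ) ⧸ Jideal a γ) :=
    Algebra.FiniteType.of_surjective (Ideal.Quotient.mkₐ ℚ (Jideal a γ))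
      (Ideal.Quotient.mkₐ_surjective ℚ (Jideal a γ))
  have hfin := Algebra.IsIntegral.finite (R := ℚ) (A := ↥(Aprim (I := I) γ) ⧸ Jideal a γ)
  exact hfin
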